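/- arXiv:2206.05556 — 2 statements merged into one kernel-verified Lean document; each statement's English description precedes it below -/
import Mathlib

section
/- Let ρ, u : [0,T] × ℝ → ℝ be C² with ρ > 0 everywhere, and suppose they satisfy the 1-D isentropic compressible Navier–Stokes equations ρ_t + (ρu)_x = 0 and (ρu)_t + (ρu²)_x + (Aρ^γ)_x = (αρ^δ u_x)_x, where A, α > 0, γ > 1, 0 < δ ≤ 1. Define the effective velocity v = u + α ρ^{δ−2} ρ_x. Then v satisfies pointwise the transport equation v_t + u v_x + (Aγ/α) ρ^{γ−δ} v = (Aγ/α) ρ^{γ−δ} u. -/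
private lemma line_fst (x t : ℝ) :
    HasDerivAt (fun s : ℝ => (s, x)) ((1:ℝ), (0:ℝ)) t :=
  (hasDerivAt_id t).prodMk (hasDerivAt_const t x)

private lemma line_snd (t x : ℝ) :
    HasDerivAt (fun y : ℝ => (t, y)) ((0:ℝ), (1:ℝ)) x :=
  (hasDerivAt_const x t).prodMk (hasDerivAt_id x)

private lemma sect_t (f : ℝ → ℝ → ℝ) (hf : ContDiff ℝ 2 (Function.uncurry f)) (t x : ℝ) :
    HasDerivAt (fun s => f s x) (fderiv ℝ (Function.uncurry f) (t, x) (1, 0)) t := by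
  have hd : HasFDerivAt (Function.uncurry f) (fderiv ℝ (Function.uncurry f) (t, x)) (t, x) :=
    ((hf.differentiable (by norm_num)) (t, x)).hasFDerivAt
  simpa [Function.comp_def] using hd.comp_hasDerivAt t (line_fst x t)

private lemma sect_x (f : ℝ → ℝ → ℝ) (hf : ContDiff ℝ 2 (Function.uncurry f)) (t x : ℝ) :
    HasDerivAt (fun y => f t y) (fderiv ℝ (Function.uncurry f) (t, x) (0, 1)) x := by
  have hd : HasFDerivAt (Function.uncurry f) (fderiv ℝ (Function.uncurry f) (t, x)) (t, x) :=
    ((hf.differentiable (by norm_num)) (t, x)).hasFDerivAt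
  simpa [Function.comp_def] using hd.comp_hasDerivAt x (line_snd t x)

private lemma sect2_t (f : ℝ → ℝ → ℝ) (hf : ContDiff ℝ 2 (Function.uncurry f)) (t x : ℝ)
    (w : ℝ × ℝ) :
    HasDerivAt (fun s => fderiv ℝ (Function.uncurry f) (s, x) w)
      (fderiv ℝ (fderiv ℝ (Function.uncurry f)) (t, x) (1, 0) w) t := by
  have hG : ContDiff ℝ 1 (fderiv ℝ (Function.uncurry f)) := hf.fderiv_right (by norm_num)
  have hd : HasFDerivAt (fderiv ℝ (Function.uncurry f))
      (fderiv ℝ (fderiv ℝ (Function.uncurry f)) (t, x)) (t, x) :=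
    ((hG.differentiable one_ne_zero) (t, x)).hasFDerivAt
  have h2 := hd.comp_hasDerivAt t (line_fst x t)
  simpa [Function.comp_def] using (ContinuousLinearMap.apply ℝ ℝ w).hasFDerivAt.comp_hasDerivAt t h2

private lemma sect2_x (f : ℝ → ℝ → ℝ) (hf : ContDiff ℝ 2 (Function.uncurry f)) (t x : ℝ)
    (w : ℝ × ℝ) :
    HasDerivAt (fun y => fderiv ℝ (Function.uncurry f) (t, y) w)
      (fderiv ℝ (fderiv ℝ (Function.uncurry f)) (t, x) (0, 1) w) x := by
  have hG : ContDiff ℝ 1 (fderiv ℝ (Function.uncurry f)) := hf.fderiv_right (by norm_num)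
  have hd : HasFDerivAt (fderiv ℝ (Function.uncurry f))
      (fderiv ℝ (fderiv ℝ (Function.uncurry f)) (t, x)) (t, x) :=
    ((hG.differentiable one_ne_zero) (t, x)).hasFDerivAt
  have h2 := hd.comp_hasDerivAt x (line_snd t x)
  simpa [Function.comp_def] using (ContinuousLinearMap.apply ℝ ℝ w).hasFDerivAt.comp_hasDerivAt x h2

private lemma symm_snd (f : ℝ → ℝ → ℝ) (hf : ContDiff ℝ 2 (Function.uncurry f)) (t x : ℝ)
    (v w : ℝ × ℝ) :
    fderiv ℝ (fderiv ℝ (Function.uncurry f)) (t, x) v w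
      = fderiv ℝ (fderiv ℝ (Function.uncurry f)) (t, x) w v := by
  have hG : ContDiff ℝ 1 (fderiv ℝ (Function.uncurry f)) := hf.fderiv_right (by norm_num)
  exact second_derivative_symmetric
    (fun y => ((hf.differentiable (by norm_num)) y).hasFDerivAt)
    (((hG.differentiable one_ne_zero) (t, x)).hasFDerivAt) v w



/-- The effective velocity `v = u + α ρ^{δ-2} ρ_x` of a positive classical
solution of the 1-D isentropic compressible Navier–Stokes equations satisfies
`v_t + u v_x + (Aγ/α) ρ^{γ-δ} v = (Aγ/α) ρ^{γ-δ} u`. -/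
theorem effective_velocity_transport (A α γ δ : ℝ)
    (hA : 0 < A) (hα : 0 < α) (hγ : 1 < γ) (hδ0 : 0 < δ) (hδ1 : δ ≤ 1)
    (ρ u : ℝ → ℝ → ℝ)
    (hρ : ContDiff ℝ 2 (Function.uncurry ρ))
    (hu : ContDiff ℝ 2 (Function.uncurry u))
    (hpos : ∀ t x, 0 < ρ t x)
    (mass : ∀ t x, deriv (fun s => ρ s x) t
        + deriv (fun y => ρ t y * u t y) x = 0)
    (mom : ∀ t x, deriv (fun s => ρ s x * u s x) t
        + deriv (fun y => ρ t y * u t y ^ 2) x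
        + deriv (fun y => A * ρ t y ^ γ) x
        = deriv (fun y => α * ρ t y ^ δ * deriv (fun z => u t z) y) x) :
    ∀ t x,
      deriv (fun s => u s x + α * ρ s x ^ (δ - 2) * deriv (fun z => ρ s z) x) t
      + u t x *
        deriv (fun y => u t y + α * ρ t y ^ (δ - 2) * deriv (fun z => ρ t z) y) x
      + (A * γ / α) * ρ t x ^ (γ - δ) *
          (u t x + α * ρ t x ^ (δ - 2) * deriv (fun z => ρ t z) x)
      = (A * γ / α) * ρ t x ^ (γ - δ) * u t x := by
  intro t x
  have hrne : ρ t x ≠ 0 := (hpos t x).ne'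
  -- mass equation expanded at (t, x)
  have E1 := mass t x
  rw [(sect_t ρ hρ t x).deriv, ((sect_x ρ hρ t x).fun_mul (sect_x u hu t x)).deriv] at E1
  -- mass equation differentiated in x
  have hmassfun : (fun y => fderiv ℝ (Function.uncurry ρ) (t, y) (1, 0)
      + (fderiv ℝ (Function.uncurry ρ) (t, y) (0, 1) * u t y
        + ρ t y * fderiv ℝ (Function.uncurry u) (t, y) (0, 1))) = fun _ => (0 : ℝ) := by
    funext y
    have h := mass t y
    rwa [(sect_t ρ hρ t y).deriv, ((sect_x ρ hρ t y).fun_mul (sect_x u hu t y)).deriv] at h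
  have E2 := ((sect2_x ρ hρ t x (1, 0)).fun_add
    (((sect2_x ρ hρ t x (0, 1)).fun_mul (sect_x u hu t x)).fun_add
      ((sect_x ρ hρ t x).fun_mul (sect2_x u hu t x (0, 1))))).deriv
  rw [hmassfun, deriv_const, symm_snd ρ hρ t x (0, 1) (1, 0)] at E2
  -- momentum equation expanded at (t, x)
  have hmomrw : (fun y => α * ρ t y ^ δ * deriv (fun z => u t z) y)
      = fun y => α * ρ t y ^ δ * fderiv ℝ (Function.uncurry u) (t, y) (0, 1) := by
    funext y
    rw [(sect_x u hu t y).deriv]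
  have E3 := mom t x
  rw [hmomrw, ((sect_t ρ hρ t x).fun_mul (sect_t u hu t x)).deriv,
    ((sect_x ρ hρ t x).fun_mul ((sect_x u hu t x).fun_pow 2)).deriv,
    (((sect_x ρ hρ t x).rpow_const (Or.inl hrne)).const_mul A).deriv,
    ((((sect_x ρ hρ t x).rpow_const (Or.inl hrne)).const_mul α).fun_mul
      (sect2_x u hu t x (0, 1))).deriv] at E3
  norm_num at E3
  -- rewrite goal derivatives
  have hvt_fun : (fun s => u s x + α * ρ s x ^ (δ - 2) * deriv (fun z => ρ s z) x)
      = fun s => u s x + α * ρ s x ^ (δ - 2) * fderiv ℝ (Function.uncurry ρ) (s, x) (0, 1) := by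
    funext s
    rw [(sect_x ρ hρ s x).deriv]
  have hvx_fun : (fun y => u t y + α * ρ t y ^ (δ - 2) * deriv (fun z => ρ t z) y)
      = fun y => u t y + α * ρ t y ^ (δ - 2) * fderiv ℝ (Function.uncurry ρ) (t, y) (0, 1) := by
    funext y
    rw [(sect_x ρ hρ t y).deriv]
  rw [hvt_fun, hvx_fun,
    ((sect_t u hu t x).fun_add ((((sect_t ρ hρ t x).rpow_const (Or.inl hrne)).const_mul α).fun_mul
      (sect2_t ρ hρ t x (0, 1)))).deriv,
    ((sect_x u hu t x).fun_add ((((sect_x ρ hρ t x).rpow_const (Or.inl hrne)).const_mul α).fun_mul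
      (sect2_x ρ hρ t x (0, 1)))).deriv,
    (sect_x ρ hρ t x).deriv]
  -- rpow bookkeeping
  have hb : ρ t x ^ (δ - 2) = ρ t x ^ (δ - 3) * ρ t x := by
    rw [show δ - 2 = δ - 3 + 1 by ring, Real.rpow_add_one hrne]
  have hc : ρ t x ^ (δ - 1) = ρ t x ^ (δ - 3) * ρ t x * ρ t x := by
    rw [show δ - 1 = δ - 3 + 1 + 1 by ring, Real.rpow_add_one hrne, Real.rpow_add_one hrne]
  have hd : ρ t x ^ δ = ρ t x ^ (δ - 3) * ρ t x * ρ t x * ρ t x := by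
    nth_rewrite 1 [show δ = δ - 3 + 1 + 1 + 1 by ring]
    rw [Real.rpow_add_one hrne, Real.rpow_add_one hrne, Real.rpow_add_one hrne]
  have he : ρ t x ^ (γ - 1) = ρ t x ^ (γ - 2) * ρ t x := by
    rw [show γ - 1 = γ - 2 + 1 by ring, Real.rpow_add_one hrne]
  have hq : ρ t x ^ (γ - δ) * (ρ t x ^ (δ - 3) * ρ t x) = ρ t x ^ (γ - 2) := by
    rw [← hb, ← Real.rpow_add (hpos t x), show γ - δ + (δ - 2) = γ - 2 by ring]
  have hα2 : α⁻¹ * α = 1 := inv_mul_cancel₀ hα.ne'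
  rw [show δ - 2 - 1 = δ - 3 by ring, hb]
  rw [hc, he, hd] at E3
  -- abbreviations
  set r : ℝ := ρ t x
  set w : ℝ := u t x
  set rt : ℝ := fderiv ℝ (Function.uncurry ρ) (t, x) (1, 0)
  set rx : ℝ := fderiv ℝ (Function.uncurry ρ) (t, x) (0, 1)
  set wt : ℝ := fderiv ℝ (Function.uncurry u) (t, x) (1, 0)
  set wx : ℝ := fderiv ℝ (Function.uncurry u) (t, x) (0, 1)
  set rtx : ℝ := fderiv ℝ (fderiv ℝ (Function.uncurry ρ)) (t, x) (1, 0) (0, 1)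
  set rxx : ℝ := fderiv ℝ (fderiv ℝ (Function.uncurry ρ)) (t, x) (0, 1) (0, 1)
  set wxx : ℝ := fderiv ℝ (fderiv ℝ (Function.uncurry u)) (t, x) (0, 1) (0, 1)
  have hwteq : wt = -(w * wx) - A * γ * r ^ (γ - 2) * rx
      + α * δ * r ^ (δ - 3) * r * rx * wx + α * r ^ (δ - 3) * r ^ 2 * wxx := by
    apply mul_left_cancel₀ hrne
    linear_combination E3 - w * E1
  linear_combination hwteq + α * (δ - 2) * r ^ (δ - 3) * rx * E1
    - α * r ^ (δ - 3) * r * E2 + A * γ * rx * hq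
    + A * γ * r ^ (γ - δ) * r ^ (δ - 3) * r * rx * hα2
end

section
/- Let ρ, u be C² functions on [0,T] × ℝ with ρ > 0 satisfying the continuity equation ρ_t + (ρu)_x = 0, and let 0 < δ < 1. Then ψ := (δ/(δ−1)) (ρ^{δ−1})_x satisfies pointwise ψ_t + (uψ)_x + (δ−1) ψ u_x + δ ρ^{δ−1} u_{xx} = 0. -/
open Function
namespace PsiAux
variable {F : ℝ → ℝ → ℝ}
noncomputable def Dv (v : ℝ × ℝ) (F : ℝ → ℝ → ℝ) : ℝ → ℝ → ℝ :=
  fun t x => fderiv ℝ (uncurry F) (t, x) v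

lemma hasDerivAt_x (hF : Differentiable ℝ (uncurry F)) (t x : ℝ) :
    HasDerivAt (fun y => F t y) (Dv (0, 1) F t x) x := by
  have h := (hF (t, x)).hasFDerivAt
  have h2 : HasDerivAt (fun y : ℝ => ((t, y) : ℝ × ℝ)) (0, 1) x := by
    simpa using ((hasDerivAt_const x t).prodMk (hasDerivAt_id x))
  exact h.comp_hasDerivAt x h2

lemma hasDerivAt_t (hF : Differentiable ℝ (uncurry F)) (t x : ℝ) :
    HasDerivAt (fun s => F s x) (Dv (1, 0) F t x) t := by
  have h := (hF (t, x)).hasFDerivAt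
  have h2 : HasDerivAt (fun s : ℝ => ((s, x) : ℝ × ℝ)) (1, 0) t := by
    simpa using ((hasDerivAt_id t).prodMk (hasDerivAt_const t x))
  exact h.comp_hasDerivAt t h2

lemma contDiff_Dv (hF : ContDiff ℝ 2 (uncurry F)) (v : ℝ × ℝ) :
    ContDiff ℝ 1 (uncurry (Dv v F)) := by
  have h1 : ContDiff ℝ 1 (fderiv ℝ (uncurry F)) := hF.fderiv_right (by norm_num)
  have h2 : ContDiff ℝ 1 (fun L : ℝ × ℝ →L[ℝ] ℝ => L v) :=
    (ContinuousLinearMap.apply ℝ ℝ v).contDiff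
  have : uncurry (Dv v F) = (fun L : ℝ × ℝ →L[ℝ] ℝ => L v) ∘ fderiv ℝ (uncurry F) := by
    ext p; cases p; rfl
  rw [this]; exact h2.comp h1

lemma clairaut (hF : ContDiff ℝ 2 (uncurry F)) (t x : ℝ) :
    Dv (1, 0) (Dv (0, 1) F) t x = Dv (0, 1) (Dv (1, 0) F) t x := by
  have hd : Differentiable ℝ (fderiv ℝ (uncurry F)) :=
    (hF.fderiv_right (m := 1) (by norm_num)).differentiable one_ne_zero
  have key : ∀ v w : ℝ × ℝ,
      Dv w (Dv v F) t x = fderiv ℝ (fderiv ℝ (uncurry F)) (t, x) w v := by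
    intro v w
    have h1 : HasFDerivAt (fderiv ℝ (uncurry F))
        (fderiv ℝ (fderiv ℝ (uncurry F)) (t, x)) (t, x) := (hd (t, x)).hasFDerivAt
    have h2 : HasFDerivAt (uncurry (Dv v F))
        (((ContinuousLinearMap.apply ℝ ℝ v)).comp
          (fderiv ℝ (fderiv ℝ (uncurry F)) (t, x))) (t, x) := by
      have := (ContinuousLinearMap.apply ℝ ℝ v).hasFDerivAt.comp (t, x) h1
      exact this
    have : Dv w (Dv v F) t x = fderiv ℝ (uncurry (Dv v F)) (t, x) w := rfl
    rw [this, h2.fderiv]; rfl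
  rw [key, key]
  exact (hF.contDiffAt.isSymmSndFDerivAt (by norm_num)) _ _

end PsiAux

open PsiAux



/-- If `ρ > 0` solves the continuity equation and `0 < δ < 1`, then
`ψ = (δ/(δ-1)) (ρ^{δ-1})_x` satisfies
`ψ_t + (uψ)_x + (δ-1) ψ u_x + δ ρ^{δ-1} u_{xx} = 0`. -/
theorem psi_transport_equation (δ : ℝ) (hδ0 : 0 < δ) (hδ1 : δ < 1)
    (ρ u ψ : ℝ → ℝ → ℝ)
    (hρ : ContDiff ℝ 2 (Function.uncurry ρ))
    (hu : ContDiff ℝ 2 (Function.uncurry u))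
    (hpos : ∀ t x, 0 < ρ t x)
    (hψ : ∀ t x, ψ t x = (δ / (δ - 1)) * deriv (fun y => ρ t y ^ (δ - 1)) x)
    (mass : ∀ t x, deriv (fun s => ρ s x) t
        + deriv (fun y => ρ t y * u t y) x = 0) :
    ∀ t x,
      deriv (fun s => ψ s x) t
      + deriv (fun y => u t y * ψ t y) x
      + (δ - 1) * ψ t x * deriv (fun y => u t y) x
      + δ * ρ t x ^ (δ - 1) * deriv (fun y => deriv (fun z => u t z) y) x
      = 0 := by
  intro t x
  have hδ1' : δ - 1 ≠ 0 := by linarith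
  have hρ1 : Differentiable ℝ (Function.uncurry ρ) := hρ.differentiable (by norm_num)
  have hu1 : Differentiable ℝ (Function.uncurry u) := hu.differentiable (by norm_num)
  have hDxρ : Differentiable ℝ (Function.uncurry (Dv (0, 1) ρ)) :=
    (contDiff_Dv hρ _).differentiable one_ne_zero
  have hDtρ : Differentiable ℝ (Function.uncurry (Dv (1, 0) ρ)) :=
    (contDiff_Dv hρ _).differentiable one_ne_zero
  have hDxu : Differentiable ℝ (Function.uncurry (Dv (0, 1) u)) :=
    (contDiff_Dv hu _).differentiable one_ne_zero
  have hne : ∀ s y, ρ s y ≠ 0 := fun s y => (hpos s y).ne'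
  have e32 : δ - 2 - 1 = δ - 3 := by ring
  have e21 : δ - 1 - 1 = δ - 2 := by ring
  -- ψ in explicit form
  have hψ' : ∀ s y, ψ s y = δ * ρ s y ^ (δ - 2) * Dv (0, 1) ρ s y := by
    intro s y
    have h := ((hasDerivAt_x hρ1 s y).rpow_const (p := δ - 1) (Or.inl (hne s y))).deriv
    rw [e21] at h
    rw [hψ s y, h]; field_simp
  -- mass equation in explicit form
  have mass' : ∀ y, Dv (1, 0) ρ t y
      = -(Dv (0, 1) ρ t y * u t y + ρ t y * Dv (0, 1) u t y) := by
    intro y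
    have h1 := (hasDerivAt_t hρ1 t y).deriv
    have h2 : deriv (fun y => ρ t y * u t y) y = _ := ((hasDerivAt_x hρ1 t y).mul (hasDerivAt_x hu1 t y)).deriv
    have := mass t y
    rw [h1, h2] at this
    linarith
  -- second x-derivatives
  have hrxx : HasDerivAt (fun y => Dv (0, 1) ρ t y) (Dv (0, 1) (Dv (0, 1) ρ) t x) x :=
    hasDerivAt_x hDxρ t x
  have huxx : HasDerivAt (fun y => Dv (0, 1) u t y) (Dv (0, 1) (Dv (0, 1) u) t x) x :=
    hasDerivAt_x hDxu t x
  -- mixed partial via mass equation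
  have hmix : Dv (1, 0) (Dv (0, 1) ρ) t x
      = -((Dv (0, 1) (Dv (0, 1) ρ) t x) * u t x + Dv (0, 1) ρ t x * Dv (0, 1) u t x
          + (Dv (0, 1) ρ t x * Dv (0, 1) u t x + ρ t x * Dv (0, 1) (Dv (0, 1) u) t x)) := by
    rw [clairaut hρ t x]
    have h1 : HasDerivAt (fun y => Dv (1, 0) ρ t y) (Dv (0, 1) (Dv (1, 0) ρ) t x) x :=
      hasDerivAt_x hDtρ t x
    have h2 : HasDerivAt (fun y => -(Dv (0, 1) ρ t y * u t y + ρ t y * Dv (0, 1) u t y))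
        (-((Dv (0, 1) (Dv (0, 1) ρ) t x) * u t x + Dv (0, 1) ρ t x * Dv (0, 1) u t x
          + (Dv (0, 1) ρ t x * Dv (0, 1) u t x + ρ t x * Dv (0, 1) (Dv (0, 1) u) t x))) x :=
      ((hrxx.mul (hasDerivAt_x hu1 t x)).add ((hasDerivAt_x hρ1 t x).mul huxx)).neg
    have hfe : (fun y => Dv (1, 0) ρ t y)
        = fun y => -(Dv (0, 1) ρ t y * u t y + ρ t y * Dv (0, 1) u t y) := funext mass'
    rw [hfe] at h1
    exact h1.unique h2
  -- ψ_t
  have hψt : deriv (fun s => ψ s x) t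
      = δ * (Dv (1, 0) ρ t x * (δ - 2) * ρ t x ^ (δ - 3)) * Dv (0, 1) ρ t x
        + δ * ρ t x ^ (δ - 2) * Dv (1, 0) (Dv (0, 1) ρ) t x := by
    have hfe : (fun s => ψ s x) = fun s => δ * ρ s x ^ (δ - 2) * Dv (0, 1) ρ s x :=
      funext fun s => hψ' s x
    rw [hfe]
    have hr : HasDerivAt (fun s => ρ s x ^ (δ - 2))
        (Dv (1, 0) ρ t x * (δ - 2) * ρ t x ^ (δ - 3)) t := by
      have := (hasDerivAt_t hρ1 t x).rpow_const (p := δ - 2) (Or.inl (hne t x))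
      rwa [e32] at this
    have hm : HasDerivAt (fun s => Dv (0, 1) ρ s x) (Dv (1, 0) (Dv (0, 1) ρ) t x) t :=
      hasDerivAt_t hDxρ t x
    exact ((hr.const_mul δ).mul hm).deriv
  -- (u ψ)_x
  have hux : HasDerivAt (fun y => u t y) (Dv (0, 1) u t x) x := hasDerivAt_x hu1 t x
  have hrpx : HasDerivAt (fun y => ρ t y ^ (δ - 2))
      (Dv (0, 1) ρ t x * (δ - 2) * ρ t x ^ (δ - 3)) x := by
    have := (hasDerivAt_x hρ1 t x).rpow_const (p := δ - 2) (Or.inl (hne t x))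
    rwa [e32] at this
  have huψx : deriv (fun y => u t y * ψ t y) x
      = Dv (0, 1) u t x * (δ * ρ t x ^ (δ - 2) * Dv (0, 1) ρ t x)
        + u t x * (δ * (Dv (0, 1) ρ t x * (δ - 2) * ρ t x ^ (δ - 3)) * Dv (0, 1) ρ t x
            + δ * ρ t x ^ (δ - 2) * Dv (0, 1) (Dv (0, 1) ρ) t x) := by
    have hfe : (fun y => u t y * ψ t y)
        = fun y => u t y * (δ * ρ t y ^ (δ - 2) * Dv (0, 1) ρ t y) :=
      funext fun y => by rw [hψ' t y]
    rw [hfe]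
    exact (hux.mul ((hrpx.const_mul δ).mul hrxx)).deriv
  -- remaining goal derivs
  have hduy : deriv (fun y => u t y) x = Dv (0, 1) u t x := hux.deriv
  have hduyy : deriv (fun y => deriv (fun z => u t z) y) x = Dv (0, 1) (Dv (0, 1) u) t x := by
    have hfe : (fun y => deriv (fun z => u t z) y) = fun y => Dv (0, 1) u t y :=
      funext fun y => (hasDerivAt_x hu1 t y).deriv
    rw [hfe]; exact huxx.deriv
  -- assemble
  rw [hψt, huψx, hduy, hduyy, hψ' t x, hmix, mass' x]
  have p2 : ρ t x ^ (δ - 2) = ρ t x ^ (δ - 3) * ρ t x := by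
    rw [show δ - 2 = (δ - 3) + 1 by ring, Real.rpow_add_one (hne t x)]
  have p1 : ρ t x ^ (δ - 1) = ρ t x ^ (δ - 3) * ρ t x * ρ t x := by
    rw [show δ - 1 = (δ - 3) + 1 + 1 by ring, Real.rpow_add_one (hne t x),
      Real.rpow_add_one (hne t x)]
  rw [p1, p2]
  ring
end
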